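/- Let L be a proper left ideal of a nest algebra T(N) which can be specified by a net (N_α, x_α)_{α∈A} with sup_α ‖x_α‖ < ∞. Then L is strongly constructible, i.e. can be specified by a net whose vectors are all unit vectors. -/

import Mathlib

noncomputable section

universe u

variable {H : Type u} [NormedAddCommGroup H] [InnerProductSpace ℂ H] [CompleteSpace H]
  [TopologicalSpace.SeparableSpace H]

/-- A nest: a linearly ordered set of orthogonal projections containing `0` and `1`. -/
structure Nest (H : Type u) [NormedAddCommGroup H] [InnerProductSpace ℂ H]
    [CompleteSpace H] where
  carrier : Set (H →L[ℂ] H)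
  isProj : ∀ P ∈ carrier, IsSelfAdjoint P ∧ P * P = P
  zero_mem : (0 : H →L[ℂ] H) ∈ carrier
  one_mem : (1 : H →L[ℂ] H) ∈ carrier
  chain : ∀ P ∈ carrier, ∀ Q ∈ carrier, Q * P = P ∨ P * Q = Q

/-- Order on projections: `P ≤ Q` iff `ran P ⊆ ran Q`. -/
def projLE (P Q : H →L[ℂ] H) : Prop := Q * P = P

/-- Strict order on projections. -/
def projLT (P Q : H →L[ℂ] H) : Prop := projLE P Q ∧ P ≠ Q

/-- The nest algebra: all bounded operators leaving invariant the range of every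
projection in the nest, i.e. `(1 - P) X P = 0` for every `P` in the nest. -/
def nestAlgebra (𝒩 : Nest H) : Subalgebra ℂ (H →L[ℂ] H) where
  carrier := {X | ∀ P ∈ 𝒩.carrier, (1 - P) * X * P = 0}
  mul_mem' := by
    intro X Y hX hY P hP
    have hX' := hX P hP
    have hY' := hY P hP
    have hYP : Y * P = P * (Y * P) := by
      have h : (1 - P) * Y * P + P * Y * P = Y * P := by noncomm_ring
      rw [hY', zero_add] at h
      rw [← mul_assoc]; exact h.symm
    calc (1 - P) * (X * Y) * P = (1 - P) * X * (Y * P) := by noncomm_ring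
      _ = (1 - P) * X * (P * (Y * P)) := by rw [← hYP]
      _ = ((1 - P) * X * P) * (Y * P) := by noncomm_ring
      _ = 0 := by rw [hX', zero_mul]
  one_mem' := by
    intro P hP
    have h := (𝒩.isProj P hP).2
    calc (1 - P) * 1 * P = P - P * P := by noncomm_ring
      _ = 0 := by rw [h, sub_self]
  add_mem' := by
    intro X Y hX hY P hP
    have hX' := hX P hP
    have hY' := hY P hP
    calc (1 - P) * (X + Y) * P = (1 - P) * X * P + (1 - P) * Y * P := by noncomm_ring
      _ = 0 := by rw [hX', hY', add_zero]
  zero_mem' := by intro P hP; simp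
  algebraMap_mem' := by
    intro c P hP
    have h := (𝒩.isProj P hP).2
    have h1 : (1 - P) * 1 * P = 0 := by
      calc (1 - P) * 1 * P = P - P * P := by noncomm_ring
        _ = 0 := by rw [h, sub_self]
    calc (1 - P) * (algebraMap ℂ (H →L[ℂ] H) c) * P
        = (1 - P) * (c • (1 : H →L[ℂ] H)) * P := by rw [Algebra.algebraMap_eq_smul_one]
      _ = c • ((1 - P) * 1 * P) := by rw [mul_smul_comm, smul_mul_assoc]
      _ = 0 := by rw [h1, smul_zero]

/-- The left ideal specified by a net `(N_α, x_α)`: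
`{X ∈ T(𝒩) : lim_α ‖(I - N_α) X x_α‖ = 0}`. -/
def constructedIdeal (𝒩 : Nest H) {A : Type u} [Preorder A]
    (Nf : A → H →L[ℂ] H) (x : A → H) : Set (H →L[ℂ] H) :=
  {X | X ∈ nestAlgebra 𝒩 ∧
    Filter.Tendsto (fun α => ‖(1 - Nf α) (X (x α))‖) Filter.atTop (nhds 0)}

/-- `L` is a left ideal of the nest algebra `T(𝒩)`. -/
def IsLeftIdealOf (𝒩 : Nest H) (L : Set (H →L[ℂ] H)) : Prop :=
  L ⊆ (nestAlgebra 𝒩 : Set (H →L[ℂ] H)) ∧ (0 : H →L[ℂ] H) ∈ L ∧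
    (∀ X ∈ L, ∀ Y ∈ L, X + Y ∈ L) ∧ (∀ c : ℂ, ∀ X ∈ L, c • X ∈ L) ∧
    (∀ T ∈ nestAlgebra 𝒩, ∀ X ∈ L, T * X ∈ L)

/-- A left ideal is constructible if it is specified by some net `(N_α, x_α)` in `𝒩 × H`. -/
def IsConstructible (𝒩 : Nest H) (L : Set (H →L[ℂ] H)) : Prop :=
  ∃ (A : Type u) (_ : Preorder A) (_ : IsDirected A (· ≤ ·)) (_ : Nonempty A)
    (Nf : A → H →L[ℂ] H) (x : A → H),
    (∀ α, Nf α ∈ 𝒩.carrier) ∧ L = constructedIdeal 𝒩 Nf x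

/-- A left ideal is strongly constructible if it is specified by some net `(N_α, x_α)`
in which every vector `x_α = (I - N_α) x_α` is a unit vector. -/
def IsStronglyConstructible (𝒩 : Nest H) (L : Set (H →L[ℂ] H)) : Prop :=
  ∃ (A : Type u) (_ : Preorder A) (_ : IsDirected A (· ≤ ·)) (_ : Nonempty A)
    (Nf : A → H →L[ℂ] H) (x : A → H),
    (∀ α, Nf α ∈ 𝒩.carrier) ∧ (∀ α, ‖x α‖ = 1) ∧ (∀ α, (1 - Nf α) (x α) = x α) ∧
    L = constructedIdeal 𝒩 Nf x


set_option linter.unusedSectionVars false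

/-- Auxiliary index structure for nets, carrying no pre-existing order instances. -/
structure NetIdx (ι : Type u) (σ : ι → Type u) : Type u where
  f : ∀ i, σ i
  idx : ι

open Filter in
lemma aux_tendsto_zero {α : Type*} [Preorder α] [IsDirected α (· ≤ ·)] [Nonempty α]
    (f : α → ℝ) (hf : ∀ a, 0 ≤ f a) :
    Filter.Tendsto f Filter.atTop (nhds 0) ↔ ∀ δ : ℝ, 0 < δ → ∃ a, ∀ b ≥ a, f b < δ := by
  rw [Metric.tendsto_nhds]
  constructor
  · intro h δ hδ
    obtain ⟨a, ha⟩ := Filter.eventually_atTop.mp (h δ hδ)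
    refine ⟨a, fun b hb => ?_⟩
    have := ha b hb
    rwa [Real.dist_0_eq_abs, abs_of_nonneg (hf b)] at this
  · intro h δ hδ
    rw [Filter.eventually_atTop]
    obtain ⟨a, ha⟩ := h δ hδ
    exact ⟨a, fun b hb => by rw [Real.dist_0_eq_abs, abs_of_nonneg (hf b)]; exact ha b hb⟩

lemma aux_proj_norm_le (P : H →L[ℂ] H) (hsa : IsSelfAdjoint P) (hidem : P * P = P) (v : H) :
    ‖(1 - P) v‖ ≤ ‖v‖ := by
  set Q : H →L[ℂ] H := 1 - P with hQdef
  have hQsa : IsSelfAdjoint Q := (IsSelfAdjoint.one (H →L[ℂ] H)).sub hsa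
  have hQidem : Q * Q = Q := by
    have h : (1 - P) * (1 - P) = 1 - P - P + P * P := by noncomm_ring
    rw [hQdef, h, hidem]; abel
  have hadj : ContinuousLinearMap.adjoint Q = Q := hQsa.adjoint_eq
  have h1 := ContinuousLinearMap.adjoint_inner_left (𝕜 := ℂ) Q (Q v) v
  rw [hadj] at h1
  have h2 : Q (Q v) = Q v := by
    have := congrArg (fun T : H →L[ℂ] H => T v) hQidem
    simpa [ContinuousLinearMap.mul_apply] using this
  rw [h2] at h1
  have h3 : (‖Q v‖ : ℝ) ^ 2 = RCLike.re (inner ℂ (Q v) (Q v) : ℂ) := (inner_self_eq_norm_sq _).symm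
  have h4 : RCLike.re (inner ℂ v (Q v) : ℂ) ≤ ‖(inner ℂ v (Q v) : ℂ)‖ := RCLike.re_le_norm _
  have h5 : ‖(inner ℂ v (Q v) : ℂ)‖ ≤ ‖v‖ * ‖Q v‖ := norm_inner_le_norm (𝕜 := ℂ) v (Q v)
  have h6 : ‖Q v‖ ^ 2 ≤ ‖v‖ * ‖Q v‖ := by rw [h3, h1]; exact le_trans h4 h5
  nlinarith [norm_nonneg (Q v), norm_nonneg v]

lemma aux_nest_reduce (𝒩 : Nest H) {X : H →L[ℂ] H} (hX : X ∈ nestAlgebra 𝒩)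
    {P : H →L[ℂ] H} (hP : P ∈ 𝒩.carrier) (v : H) :
    (1 - P) (X (v - P v)) = (1 - P) (X v) := by
  have hX' : (1 - P) * X * P = 0 := hX P hP
  have h0 : ((1 - P) * X * P) v = 0 := by rw [hX']; rfl
  have h1 : (1 - P) (X (P v)) = 0 := by
    simpa [ContinuousLinearMap.mul_apply] using h0
  rw [map_sub X, map_sub (1 - P), h1, sub_zero]

/-- a proper left ideal specified by a net whose vectors are uniformly
bounded in norm is strongly constructible. -/
theorem statement10 (𝒩 : Nest H) {A : Type u} [Preorder A] [IsDirected A (· ≤ ·)]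
    [Nonempty A] (Nf : A → H →L[ℂ] H) (hNf : ∀ α, Nf α ∈ 𝒩.carrier) (x : A → H)
    (C : ℝ) (hbdd : ∀ α, ‖x α‖ ≤ C)
    (hproper : constructedIdeal 𝒩 Nf x ≠ (nestAlgebra 𝒩 : Set (H →L[ℂ] H))) :
    IsStronglyConstructible 𝒩 (constructedIdeal 𝒩 Nf x) := by
  classical
  set y : A → H := fun α => x α - Nf α (x α) with hy
  have hidem : ∀ α, Nf α * Nf α = Nf α := fun α => (𝒩.isProj _ (hNf α)).2
  have hsa : ∀ α, IsSelfAdjoint (Nf α) := fun α => (𝒩.isProj _ (hNf α)).1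
  have hyapp : ∀ α, (1 - Nf α) (x α) = y α := by
    intro α
    simp [hy, ContinuousLinearMap.sub_apply, ContinuousLinearMap.one_apply]
  have hNy : ∀ α, Nf α (y α) = 0 := by
    intro α
    have h := congrArg (fun T : H →L[ℂ] H => T (x α)) (hidem α)
    simp only [ContinuousLinearMap.mul_apply] at h
    simp [hy, map_sub, h]
  have hyfix : ∀ α, (1 - Nf α) (y α) = y α := by
    intro α
    simp [ContinuousLinearMap.sub_apply, ContinuousLinearMap.one_apply, hNy α]
  have hy_le : ∀ α, ‖y α‖ ≤ ‖x α‖ := by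
    intro α; rw [← hyapp α]; exact aux_proj_norm_le _ (hsa α) (hidem α) _
  have hXalg_eq : ∀ X ∈ nestAlgebra 𝒩, ∀ α,
      (1 - Nf α) (X (y α)) = (1 - Nf α) (X (x α)) := by
    intro X hX α
    exact aux_nest_reduce 𝒩 hX (hNf α) (x α)
  have hcontr : ∀ α (v : H), ‖(1 - Nf α) v‖ ≤ ‖v‖ :=
    fun α v => aux_proj_norm_le _ (hsa α) (hidem α) v
  have h0L : (0 : H →L[ℂ] H) ∈ constructedIdeal 𝒩 Nf x := by
    refine ⟨Subalgebra.zero_mem _, ?_⟩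
    have h : (fun α => ‖(1 - Nf α) ((0 : H →L[ℂ] H) (x α))‖) = fun _ => 0 := by
      funext α; simp
    rw [h]; exact tendsto_const_nhds
  have hLsub : constructedIdeal 𝒩 Nf x ⊆ ↑(nestAlgebra 𝒩) := fun X hX => hX.1
  obtain ⟨T₀, hT₀alg, hT₀L⟩ : ∃ T, T ∈ nestAlgebra 𝒩 ∧ T ∉ constructedIdeal 𝒩 Nf x := by
    by_contra h
    push_neg at h
    exact hproper (Set.Subset.antisymm hLsub (fun T hT => h T hT))
  have hCpos : 0 < C := by
    by_contra hC
    push_neg at hC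
    have hx0 : ∀ α, x α = 0 := fun α => norm_le_zero_iff.mp (le_trans (hbdd α) hC)
    apply hproper
    refine Set.Subset.antisymm hLsub ?_
    intro X hX
    refine ⟨hX, ?_⟩
    have h : (fun α => ‖(1 - Nf α) (X (x α))‖) = fun _ => 0 := by
      funext α; simp [hx0 α]
    rw [h]; exact tendsto_const_nhds
  set I : Type u := {T : H →L[ℂ] H // T ∈ nestAlgebra 𝒩 ∧ T ∉ constructedIdeal 𝒩 Nf x} with hI
  haveI hIne : Nonempty I := ⟨⟨T₀, hT₀alg, hT₀L⟩⟩
  have hkey : ∀ i : I, ∃ ε : ℝ, 0 < ε ∧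
      ∀ α₀ : A, ∃ α, α₀ ≤ α ∧ ε ≤ ‖(1 - Nf α) (i.1 (x α))‖ := by
    intro i
    by_contra hcon
    push_neg at hcon
    apply i.2.2
    refine ⟨i.2.1, ?_⟩
    rw [aux_tendsto_zero _ (fun α => norm_nonneg _)]
    intro δ hδ
    obtain ⟨α₀, hα₀⟩ := hcon δ hδ
    exact ⟨α₀, fun β hβ => hα₀ β hβ⟩
  choose ε hεpos hεcof using hkey
  have hi_pos : ∀ i : I, 0 < ‖i.1‖ := by
    intro i
    rw [norm_pos_iff]
    intro h
    exact i.2.2 (h ▸ h0L)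
  set S : I → Type u := fun i => {α : A // ε i ≤ ‖(1 - Nf α) (i.1 (x α))‖} with hS
  haveI hSne : ∀ i, Nonempty (S i) := by
    intro i
    obtain ⟨α, _, hmem⟩ := hεcof i (Classical.arbitrary A)
    exact ⟨⟨α, hmem⟩⟩
  have hylb : ∀ (i : I) (α : A), ε i ≤ ‖(1 - Nf α) (i.1 (x α))‖ → ε i ≤ ‖i.1‖ * ‖y α‖ := by
    intro i α hmem
    calc ε i ≤ ‖(1 - Nf α) (i.1 (x α))‖ := hmem
      _ = ‖(1 - Nf α) (i.1 (y α))‖ := by rw [hXalg_eq i.1 i.2.1 α]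
      _ ≤ ‖i.1 (y α)‖ := hcontr α _
      _ ≤ ‖i.1‖ * ‖y α‖ := ContinuousLinearMap.le_opNorm _ _
  have hypos : ∀ (i : I) (α : A), ε i ≤ ‖(1 - Nf α) (i.1 (x α))‖ → 0 < ‖y α‖ := by
    intro i α hmem
    by_contra h
    push_neg at h
    have h2 : ‖i.1‖ * ‖y α‖ ≤ 0 := mul_nonpos_of_nonneg_of_nonpos (norm_nonneg _) h
    linarith [hεpos i, hylb i α hmem]
  set B : Type u := NetIdx I S with hB
  letI PB : Preorder B := Preorder.lift NetIdx.f
  have hle : ∀ a b : B, a ≤ b ↔ ∀ i : I, (a.f i).1 ≤ (b.f i).1 := by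
    intro a b
    constructor
    · intro h i
      exact Subtype.coe_le_coe.mpr ((show a.f ≤ b.f from h) i)
    · intro h
      show a.f ≤ b.f
      exact fun i => Subtype.coe_le_coe.mp (h i)
  haveI DB : IsDirected B (· ≤ ·) := by
    constructor
    intro a b
    have h : ∀ i : I, ∃ r : S i, (a.f i).1 ≤ r.1 ∧ (b.f i).1 ≤ r.1 := by
      intro i
      obtain ⟨γ, h1, h2⟩ := directed_of (· ≤ ·) (a.f i).1 (b.f i).1
      obtain ⟨α, hγ, hmem⟩ := hεcof i γ
      exact ⟨⟨α, hmem⟩, le_trans h1 hγ, le_trans h2 hγ⟩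
    choose g hg1 hg2 using h
    refine ⟨⟨g, a.idx⟩, ?_, ?_⟩
    · rw [hle]; exact hg1
    · rw [hle]; exact hg2
  haveI NB : Nonempty B := ⟨⟨fun i => Classical.choice (hSne i), Classical.arbitrary I⟩⟩
  have hval : ∀ (X : H →L[ℂ] H), X ∈ nestAlgebra 𝒩 → ∀ b : B,
      ‖(1 - Nf (b.f b.idx).1) (X (‖y (b.f b.idx).1‖⁻¹ • y (b.f b.idx).1))‖
        = ‖y (b.f b.idx).1‖⁻¹ * ‖(1 - Nf (b.f b.idx).1) (X (x (b.f b.idx).1))‖ := by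
    intro X hX b
    rw [ContinuousLinearMap.map_smul_of_tower, ContinuousLinearMap.map_smul_of_tower,
      hXalg_eq X hX, norm_smul, Real.norm_eq_abs,
      abs_of_nonneg (inv_nonneg.mpr (norm_nonneg _))]
  refine ⟨B, PB, DB, NB, (fun b => Nf (b.f b.idx).1),
    (fun b => ‖y (b.f b.idx).1‖⁻¹ • y (b.f b.idx).1),
    fun b => hNf _, ?_, ?_, ?_⟩
  · intro b
    have hp := hypos b.idx (b.f b.idx).1 (b.f b.idx).2
    rw [norm_smul, norm_inv, norm_norm, inv_mul_cancel₀ (ne_of_gt hp)]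
  · intro b
    rw [ContinuousLinearMap.map_smul_of_tower, hyfix]
  · ext X
    simp only [constructedIdeal, Set.mem_setOf_eq]
    constructor
    · rintro ⟨hXa, hXt⟩
      refine ⟨hXa, ?_⟩
      rw [aux_tendsto_zero _ (fun b => norm_nonneg _)]
      intro δ hδ
      have hA := (aux_tendsto_zero _ (fun α => norm_nonneg _)).mp hXt
      have hfz : ∀ i : I, ∃ s : S i, ∀ α, s.1 ≤ α →
          ‖(1 - Nf α) (X (x α))‖ < δ * ε i / (2 * ‖i.1‖) := by
        intro i
        have hpos : 0 < δ * ε i / (2 * ‖i.1‖) :=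
          div_pos (mul_pos hδ (hεpos i)) (mul_pos two_pos (hi_pos i))
        obtain ⟨α₀, hα₀⟩ := hA _ hpos
        obtain ⟨α₁, h1, hmem⟩ := hεcof i α₀
        exact ⟨⟨α₁, hmem⟩, fun α hα => hα₀ α (le_trans h1 hα)⟩
      choose f₀ hf₀ using hfz
      refine ⟨⟨f₀, Classical.arbitrary I⟩, ?_⟩
      intro b hb
      rw [hval X hXa b]
      have hb' : (f₀ b.idx).1 ≤ (b.f b.idx).1 := (hle ⟨f₀, Classical.arbitrary I⟩ b).mp hb b.idx
      have hmem : ε b.idx ≤ ‖(1 - Nf (b.f b.idx).1) ((b.idx).1 (x (b.f b.idx).1))‖ :=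
        (b.f b.idx).2
      have h1 : ‖(1 - Nf (b.f b.idx).1) (X (x (b.f b.idx).1))‖
          < δ * ε b.idx / (2 * ‖(b.idx).1‖) := hf₀ b.idx (b.f b.idx).1 hb'
      have h2 : ε b.idx ≤ ‖(b.idx).1‖ * ‖y (b.f b.idx).1‖ := hylb b.idx (b.f b.idx).1 hmem
      have h3 : 0 < ‖y (b.f b.idx).1‖ := hypos b.idx (b.f b.idx).1 hmem
      have h5 : ‖(1 - Nf (b.f b.idx).1) (X (x (b.f b.idx).1))‖ * (2 * ‖(b.idx).1‖)
          < δ * ε b.idx := (lt_div_iff₀ (mul_pos two_pos (hi_pos b.idx))).mp h1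
      have h6 : ‖(1 - Nf (b.f b.idx).1) (X (x (b.f b.idx).1))‖ < δ * ‖y (b.f b.idx).1‖ := by
        nlinarith [norm_nonneg ((1 - Nf (b.f b.idx).1) (X (x (b.f b.idx).1))), hi_pos b.idx,
          hεpos b.idx, hδ, mul_le_mul_of_nonneg_left h2 hδ.le]
      rw [← div_eq_inv_mul]
      exact (div_lt_iff₀ h3).mpr h6
    · rintro ⟨hXa, hXt⟩
      refine ⟨hXa, ?_⟩
      by_contra hnot
      have hiX : X ∈ nestAlgebra 𝒩 ∧ X ∉ constructedIdeal 𝒩 Nf x :=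
        ⟨hXa, fun h => hnot h.2⟩
      set i : I := ⟨X, hiX⟩ with hi
      rw [aux_tendsto_zero _ (fun b => norm_nonneg _)] at hXt
      obtain ⟨b₀, hb₀⟩ := hXt (ε i / (2 * C)) (div_pos (hεpos i) (mul_pos two_pos hCpos))
      have hv := hb₀ ⟨b₀.f, i⟩ ((hle b₀ ⟨b₀.f, i⟩).mpr (fun k => le_refl _))
      rw [hval X hXa ⟨b₀.f, i⟩] at hv
      have hmem : ε i ≤ ‖(1 - Nf (b₀.f i).1) (X (x (b₀.f i).1))‖ := (b₀.f i).2
      have h3 : 0 < ‖y (b₀.f i).1‖ := hypos i (b₀.f i).1 hmem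
      have h4 : ‖y (b₀.f i).1‖ ≤ C := le_trans (hy_le _) (hbdd _)
      rw [← div_eq_inv_mul] at hv
      have h5 : ‖(1 - Nf (b₀.f i).1) (X (x (b₀.f i).1))‖ < ε i / (2 * C) * ‖y (b₀.f i).1‖ :=
        (div_lt_iff₀ h3).mp hv
      have h6 : ε i / (2 * C) * ‖y (b₀.f i).1‖ ≤ ε i / (2 * C) * C := by
        apply mul_le_mul_of_nonneg_left h4
        exact le_of_lt (div_pos (hεpos i) (mul_pos two_pos hCpos))
      have h7 : ε i / (2 * C) * C = ε i / 2 := by field_simp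
      linarith [hmem, hεpos i]
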